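/- In any implication zroupoid satisfying x'' = x, the identity (x → (y → x)')' = (x → y) → x holds. -/

import Mathlib

theorem stmt2 (A : Type*) (imp : A → A → A) (z : A)
    (hI : ∀ x y w : A, imp (imp x y) w = imp (imp (imp (imp w z) x) (imp (imp y w) z)) z)
    (hI0 : imp (imp z z) z = z)
    (hInv : ∀ x : A, imp (imp x z) z = x) :
    ∀ x y : A, imp (imp x (imp (imp y x) z)) z = imp (imp x y) x := by
  have inj : ∀ a b : A, imp a z = imp b z → a = b := fun a b h => by
    rw [← hInv a, h, hInv]
  have hA : ∀ a b : A, imp (imp (imp z z) a) b = imp a b := by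
    intro a b
    have h := hI a b z
    rw [hInv b] at h
    exact (inj _ _ h).symm
  have hB : ∀ a : A, imp (imp z z) a = a := fun a => inj _ _ (hA a z)
  have h3 : imp (imp z z) (imp z z) = imp z (imp z z) := by
    have h := hI z z (imp z z)
    rw [hI0] at h
    rw [hB (imp (imp z (imp z z)) z)] at h
    rw [hInv] at h
    exact h
  have h4 : ∀ a : A, imp (imp z (imp z z)) a = imp (imp a (imp a z)) z := by
    intro a
    have h := hI z (imp z z) a
    rw [hInv a] at h
    rw [hB a] at h
    exact h
  have h5 : ∀ a : A, imp a (imp a z) = imp a z := by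
    intro a
    have h := congrArg (fun t => imp t z) (h4 a)
    change imp (imp (imp z (imp z z)) a) z = imp (imp (imp a (imp a z)) z) z at h
    rw [hInv] at h
    rw [← h3] at h
    rw [hA (imp z z) a] at h
    rw [hB a] at h
    exact h.symm
  have h6 : ∀ a : A, imp (imp a z) a = a := by
    intro a
    have h := h5 (imp a z)
    rw [hInv a] at h
    exact h
  intro x y
  have h := hI x y x
  rw [h6 x] at h
  exact h.symm
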